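/- Let $u_1:[0,\infty)\to[0,\infty)$ be continuous, not identically zero, supported in $[0,1]$. Then there exist $r_0 \in (0,1)$ and $C \in (0,1)$ such that for all $t, r \ge 0$ with $t + r > 1$ and $0 < t - r < r_0$, the spherical mean expression $\frac{1}{2r}\int_{t-r}^{t+r} u_1(\lambda)\lambda\,d\lambda \ge C (t+r)^{-1}$. -/
import Mathlib


/-- Initial lower bound for the free wave: if `u₁ : [0,∞) → [0,∞)` is continuous,
not identically zero, and supported in `[0,1]`, then there are `r₀ ∈ (0,1)` and
`C ∈ (0,1)` such that for all `t, r ≥ 0` with `t + r > 1` and `0 < t - r < r₀`,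
`(1/(2r)) ∫_{t-r}^{t+r} u₁(λ) λ dλ ≥ C (t+r)⁻¹`. -/
theorem free_wave_initial_lower_bound (u₁ : ℝ → ℝ)
    (hcont : Continuous u₁) (hnonneg : ∀ x, 0 ≤ u₁ x)
    (hne : ∃ x, u₁ x ≠ 0)
    (hsupp : ∀ x, x ∉ Set.Icc (0 : ℝ) 1 → u₁ x = 0) :
    ∃ r₀ ∈ Set.Ioo (0 : ℝ) 1, ∃ C ∈ Set.Ioo (0 : ℝ) 1,
      ∀ t r : ℝ, 0 ≤ t → 0 ≤ r → 1 < t + r → 0 < t - r → t - r < r₀ →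
        C * (t + r)⁻¹ ≤ (1 / (2 * r)) * ∫ l in (t - r)..(t + r), u₁ l * l := by
  obtain ⟨x₀, hx₀⟩ := hne
  have hx₀pos : 0 < u₁ x₀ := lt_of_le_of_ne (hnonneg x₀) (Ne.symm hx₀)
  have hx₀mem : x₀ ∈ Set.Icc (0 : ℝ) 1 := by
    by_contra h; exact hx₀ (hsupp x₀ h)
  -- find a point y in (0,1) with u₁ y > 0
  have hS : IsOpen {x : ℝ | 0 < u₁ x} := isOpen_lt continuous_const hcont
  obtain ⟨y, hyS, hy01⟩ : ∃ y, 0 < u₁ y ∧ y ∈ Set.Ioo (0 : ℝ) 1 := by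
    have h1 : {x : ℝ | 0 < u₁ x} ∈ nhds x₀ := hS.mem_nhds hx₀pos
    have h2 : (Set.Ioo (0 : ℝ) 1).Nonempty ∧ ∀ᶠ z in nhdsWithin x₀ (Set.Ioo 0 1),
        0 < u₁ z := by
      constructor
      · exact ⟨1/2, by norm_num⟩
      · exact eventually_nhdsWithin_of_eventually_nhds h1
    have hcl : x₀ ∈ closure (Set.Ioo (0 : ℝ) 1) := by
      rw [closure_Ioo (by norm_num : (0:ℝ) ≠ 1)]
      exact hx₀mem
    have hne' : (nhdsWithin x₀ (Set.Ioo (0:ℝ) 1)).NeBot :=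
      mem_closure_iff_nhdsWithin_neBot.mp hcl
    have := (h2.2.and (eventually_mem_nhdsWithin (s := Set.Ioo (0:ℝ) 1))).exists
    obtain ⟨z, hz1, hz2⟩ := this
    exact ⟨z, hz1, hz2⟩
  obtain ⟨hy0, hy1⟩ := hy01
  -- find δ such that u₁ > 0 on ball
  obtain ⟨δ, hδpos, hδ⟩ := Metric.isOpen_iff.mp hS y hyS
  set δ' : ℝ := min (δ/2) (min (y/2) ((1-y)/2)) with hδ'def
  have hδ'pos : 0 < δ' := by
    apply lt_min (by linarith) (lt_min (by linarith) (by linarith))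
  have hδ'le : δ' ≤ δ/2 := min_le_left _ _
  have hδ'y : δ' ≤ y/2 := (min_le_right _ _).trans (min_le_left _ _)
  have hδ'1y : δ' ≤ (1-y)/2 := (min_le_right _ _).trans (min_le_right _ _)
  set a : ℝ := y - δ' with ha
  set b : ℝ := y + δ' with hb
  have hapos : 0 < a := by simp only [ha]; linarith
  have hb1 : b < 1 := by simp only [hb]; linarith
  have hab : a < b := by simp only [ha, hb]; linarith
  have hupos : ∀ l, a ≤ l → l ≤ b → 0 < u₁ l := by
    intro l h1 h2
    apply hδ
    rw [Metric.mem_ball, Real.dist_eq, abs_lt]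
    simp only [ha, hb] at h1 h2
    constructor <;> linarith
  -- f and its properties
  set f : ℝ → ℝ := fun l => u₁ l * l with hf
  have hfc : Continuous f := hcont.mul continuous_id
  have hfnn : ∀ l, 0 ≤ f l := by
    intro l
    rcases le_or_gt 0 l with h | h
    · exact mul_nonneg (hnonneg l) h
    · have : u₁ l = 0 := hsupp l (by simp [Set.mem_Icc]; intro; linarith)
      simp [hf, this]
  set I : ℝ := ∫ l in a..(1:ℝ), f l with hI
  have hIpos : 0 < I := by
    have h1 : 0 < ∫ l in a..b, f l := by
      apply intervalIntegral.intervalIntegral_pos_of_pos_on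
        (hfc.intervalIntegrable a b) _ hab
      intro x hx
      exact mul_pos (hupos x hx.1.le hx.2.le) (hapos.trans hx.1)
    refine lt_of_lt_of_le h1 ?_
    apply intervalIntegral.integral_mono_interval le_rfl hab.le hb1.le
    · filter_upwards with x using hfnn x
    · exact hfc.intervalIntegrable a 1
  set C : ℝ := min I (1/2) with hC
  refine ⟨a, ⟨hapos, by linarith⟩, C, ⟨lt_min hIpos (by norm_num), ?_⟩, ?_⟩
  · exact lt_of_le_of_lt (min_le_right _ _) (by norm_num)
  intro t r ht hr htr1 htr0 htra
  have hrpos : 0 < r := by nlinarith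
  have h2r : 0 < 2 * r := by linarith
  have hle : (2 : ℝ) * r ≤ t + r := by linarith
  have hint : I ≤ ∫ l in (t - r)..(t + r), f l := by
    apply intervalIntegral.integral_mono_interval (le_of_lt htra)
      (by linarith) (le_of_lt htr1)
    · filter_upwards with x using hfnn x
    · exact hfc.intervalIntegrable _ _
  have htrpos : (0:ℝ) < t + r := by linarith
  calc C * (t + r)⁻¹ ≤ I * (t + r)⁻¹ := by
        apply mul_le_mul_of_nonneg_right (min_le_left _ _) (by positivity)
    _ ≤ I * (2 * r)⁻¹ := by
        gcongr
    _ ≤ (∫ l in (t - r)..(t + r), f l) * (2 * r)⁻¹ := by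
        apply mul_le_mul_of_nonneg_right hint (by positivity)
    _ = (1 / (2 * r)) * ∫ l in (t - r)..(t + r), u₁ l * l := by
        rw [one_div, mul_comm]
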